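/- arXiv:1905.07850 — 2 statements merged into one kernel-verified Lean document; each statement's English description precedes it below -/
import Mathlib

section
/- If g is an automorphism of ([ℕ]^{<ω}, (E_i)_{i∈ℕ}) with g(∅) = H, then for all finite F, g(F) = F △ H; the proof proceeds by induction on the cardinality of F. -/
open scoped symmDiff

/-- `E i F G` holds iff the symmetric difference of `F` and `G` is `{i}`. -/
def Erel (i : ℕ) (F G : Finset ℕ) : Prop := F ∆ G = {i}

theorem stmt_2 (g : Finset ℕ → Finset ℕ) (hbij : Function.Bijective g)
    (hpres : ∀ (i : ℕ) (F G : Finset ℕ), Erel i F G ↔ Erel i (g F) (g G))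
    (H : Finset ℕ) (hH : g ∅ = H) :
    ∀ F : Finset ℕ, g F = F ∆ H := by
  have key : ∀ (F : Finset ℕ) (i : ℕ), g (F ∆ {i}) = g F ∆ {i} := by
    intro F i
    have h1 : Erel i F (F ∆ {i}) := symmDiff_symmDiff_cancel_left F {i}
    have h2 := (hpres i F (F ∆ {i})).mp h1
    unfold Erel at h2
    calc g (F ∆ {i}) = g F ∆ (g F ∆ g (F ∆ {i})) :=
          (symmDiff_symmDiff_cancel_left _ _).symm
      _ = g F ∆ {i} := by rw [h2]
  intro F
  induction F using Finset.strongInduction with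
  | _ F ih =>
    rcases F.eq_empty_or_nonempty with rfl | ⟨i, hi⟩
    · rw [show (∅ : Finset ℕ) ∆ H = H from bot_symmDiff H]; exact hH
    · have hF : F = F.erase i ∆ {i} := by
        ext x
        by_cases hx : x = i <;>
          simp [Finset.mem_symmDiff, Finset.mem_erase, hx, hi]
      rw [hF, key, ih (F.erase i) (Finset.erase_ssubset hi),
        symmDiff_assoc, symmDiff_comm H, ← symmDiff_assoc, ← hF]
end

section
/- Define P((F,τ),(G,ρ)) to hold iff ρ = τ⌢i for some i and either (i ∉ F and |G| even) or (i ∈ F and |G| odd). If g maps (F,τ) to (F △ H_τ, τ) for each string τ with fixed finite sets H_τ, then g preserves P if and only if for all τ and i: i ∈ H_τ ⟺ |H_{τ⌢i}| is odd. -/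
open scoped symmDiff

/-- The parity relation `P` on `[ℕ]^{<ω} × ℕ^{<ω}`:
`P((F,τ),(G,ρ))` holds iff `ρ = τ⌢i` for some `i` and either
(`i ∉ F` and `|G|` is even) or (`i ∈ F` and `|G|` is odd). -/
def Prel (x y : Finset ℕ × List ℕ) : Prop :=
  ∃ i : ℕ, y.2 = x.2 ++ [i] ∧
    ((i ∉ x.1 ∧ Even y.1.card) ∨ (i ∈ x.1 ∧ Odd y.1.card))

lemma card_symmDiff_aux (A B : Finset ℕ) :
    (A ∆ B).card + 2 * (A ∩ B).card = A.card + B.card := by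
  have h1 : (A ∆ B) ∪ (A ∩ B) = A ∪ B := symmDiff_sup_inf A B
  have h2 : Disjoint (A ∆ B) (A ∩ B) := disjoint_symmDiff_inf A B
  have h3 := Finset.card_union_of_disjoint h2
  have h4 := Finset.card_union_add_card_inter A B
  rw [h1] at h3
  omega

lemma odd_card_symmDiff (A B : Finset ℕ) :
    Odd ((A ∆ B).card) ↔ ¬ (Odd A.card ↔ Odd B.card) := by
  have := card_symmDiff_aux A B
  rw [Nat.odd_iff, Nat.odd_iff, Nat.odd_iff]
  omega

theorem stmt_11 (H : List ℕ → Finset ℕ) :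
    (∀ x y : Finset ℕ × List ℕ,
        Prel x y ↔ Prel (x.1 ∆ H x.2, x.2) (y.1 ∆ H y.2, y.2)) ↔
    (∀ (τ : List ℕ) (i : ℕ), i ∈ H τ ↔ Odd (H (τ ++ [i])).card) := by
  constructor
  · intro h τ i
    have := (h (∅, τ) (∅, τ ++ [i])).mp ⟨i, rfl, Or.inl ⟨Finset.notMem_empty i, by simp⟩⟩
    obtain ⟨j, hj, hcase⟩ := this
    simp only at hj
    have hij : j = i := by
      have := List.append_inj_right hj (rfl)
      simpa using this.symm
    subst hij
    simp only [show (∅ : Finset ℕ) = ⊥ from rfl, bot_symmDiff] at hcase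
    rcases hcase with ⟨hn, he⟩ | ⟨hm, ho⟩
    · exact iff_of_false hn (Nat.not_odd_iff_even.mpr he)
    · exact iff_of_true hm ho
  · intro h x y
    obtain ⟨F, τ⟩ := x
    obtain ⟨G, ρ⟩ := y
    constructor
    · rintro ⟨i, hρ, hcase⟩
      refine ⟨i, hρ, ?_⟩
      subst hρ
      simp only at *
      have hmem : i ∈ F ∆ H τ ↔ ¬ (i ∈ F ↔ i ∈ H τ) := by
        rw [Finset.mem_symmDiff]; tauto
      have hodd := odd_card_symmDiff G (H (τ ++ [i]))
      have hk := h τ i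
      rcases hcase with ⟨hn, he⟩ | ⟨hm, ho⟩
      · rw [← Nat.not_odd_iff_even] at he
        by_cases hi : i ∈ H τ
        · exact Or.inr ⟨hmem.mpr (by tauto), hodd.mpr (by tauto)⟩
        · exact Or.inl ⟨fun c => (hmem.mp c) (by tauto), by
            rw [← Nat.not_odd_iff_even]; rw [hodd]; tauto⟩
      · by_cases hi : i ∈ H τ
        · exact Or.inl ⟨fun c => (hmem.mp c) (by tauto), by
            rw [← Nat.not_odd_iff_even]; rw [hodd]; tauto⟩
        · exact Or.inr ⟨hmem.mpr (by tauto), hodd.mpr (by tauto)⟩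
    · rintro ⟨i, hρ, hcase⟩
      refine ⟨i, hρ, ?_⟩
      subst hρ
      simp only at *
      have hmem : i ∈ F ∆ H τ ↔ ¬ (i ∈ F ↔ i ∈ H τ) := by
        rw [Finset.mem_symmDiff]; tauto
      have hodd := odd_card_symmDiff G (H (τ ++ [i]))
      have hk := h τ i
      rcases hcase with ⟨hn, he⟩ | ⟨hm, ho⟩
      · rw [← Nat.not_odd_iff_even] at he
        rw [hodd] at he
        rw [hmem] at hn
        push_neg at hn
        by_cases hi : i ∈ F
        · exact Or.inr ⟨hi, by tauto⟩
        · exact Or.inl ⟨hi, by rw [← Nat.not_odd_iff_even]; tauto⟩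
      · rw [hodd] at ho
        rw [hmem] at hm
        by_cases hi : i ∈ F
        · exact Or.inr ⟨hi, by tauto⟩
        · exact Or.inl ⟨hi, by rw [← Nat.not_odd_iff_even]; tauto⟩
end
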